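/- arXiv:2408.12678 — 5 statements merged into one kernel-verified Lean document; each statement's English description precedes it below -/
import Mathlib

section
/- Let R be a commutative ring, k ≥ 1, and let e_1 ≤ … ≤ e_k and f_1 ≤ … ≤ f_k be nondecreasing integer tuples. Let A be a k×k matrix with entries in the polynomial ring R[t] satisfying deg A_{r,c} ≤ f_r − e_{k+1−c} for all r, c (with the convention deg 0 = −∞, so the entry A_{r,c} must be 0 whenever f_r − e_{k+1−c} < 0). If f_i < e_i for some 1 ≤ i ≤ k, then det A = 0. -/
/-- Let `e₁ ≤ … ≤ e_k` and `f₁ ≤ … ≤ f_k` be nondecreasing integer tuples and `A` a `k × k`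
matrix over `R[t]` with `deg A r c ≤ f r - e (k+1-c)` (with `deg 0 = -∞`, encoded by the
vanishing of all coefficients beyond the bound; `k+1-c` `1`-indexed is `c.rev` `0`-indexed).
If `f i < e i` for some `i`, then `det A = 0`. -/
theorem stmt_4 {R : Type*} [CommRing R] (k : ℕ) (hk : 1 ≤ k)
    (e f : Fin k → ℤ) (he : Monotone e) (hf : Monotone f)
    (A : Matrix (Fin k) (Fin k) (Polynomial R))
    (hA : ∀ r c : Fin k, ∀ n : ℕ, f r - e c.rev < (n : ℤ) → (A r c).coeff n = 0)
    (i : Fin k) (hfe : f i < e i) :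
    A.det = 0 := by
  -- Key: A r c = 0 whenever σ c = r ≤ i and i ≤ c.rev.
  have hzero : ∀ r c : Fin k, r ≤ i → i ≤ c.rev → A r c = 0 := by
    intro r c hr hc
    ext n
    rw [Polynomial.coeff_zero]
    apply hA
    have : f r ≤ f i := hf hr
    have : e i ≤ e c.rev := he hc
    omega
  rw [Matrix.det_apply]
  apply Finset.sum_eq_zero
  intro σ _
  -- find c with σ c ≤ i and i ≤ c.rev
  obtain ⟨c, hc1, hc2⟩ : ∃ c : Fin k, i ≤ c.rev ∧ σ c ≤ i := by
    by_contra h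
    push_neg at h
    set T : Finset (Fin k) := Finset.Iic i |>.map ⟨fun c => σ⁻¹ c, fun a b hab => by
      simpa using congrArg σ hab⟩ with hT
    set S : Finset (Fin k) := (Finset.Ici i).map ⟨Fin.rev, Fin.rev_injective⟩ with hS
    have hScard : S.card = k - i := by simp [hS, Fin.card_Ici]
    have hTcard : T.card = i + 1 := by simp [hT, Fin.card_Iic]
    have hdisj : Disjoint S T := by
      rw [Finset.disjoint_left]
      rintro x hx hx'
      simp only [hS, hT, Finset.mem_map, Finset.mem_Ici, Finset.mem_Iic,
        Function.Embedding.coeFn_mk] at hx hx'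
      obtain ⟨a, ha, rfl⟩ := hx
      obtain ⟨b, hb, hba⟩ := hx'
      have : i ≤ (σ⁻¹ b).rev := by rw [show σ⁻¹ b = a.rev from hba]; simpa using ha
      have := h _ this
      rw [show σ (σ⁻¹ b) = b from σ.apply_symm_apply b] at this
      exact absurd hb (not_le.mpr this)
    have hle := Finset.card_le_univ (S ∪ T)
    rw [Finset.card_union_of_disjoint hdisj, hScard, hTcard, Fintype.card_fin] at hle
    omega
  have : A (σ c) c = 0 := hzero _ _ hc2 hc1
  exact smul_eq_zero_of_right _ (Finset.prod_eq_zero (Finset.mem_univ c) this)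
end

section
/- Let R be a commutative ring, k ≥ 2, m ≥ 0 an integer, and let e_1 ≤ … ≤ e_k and f_1 ≤ … ≤ f_k be nondecreasing integer tuples. Let A and B be k×k matrices with entries in R[t] satisfying deg A_{r,c} ≤ f_r − e_{k+1−c} and deg B_{r,c} ≤ f_r − e_{k+1−c} + m for all r, c (with deg 0 = −∞, so an entry must be 0 when its bound is negative). Suppose f_i < e_{i+1} − m for some 1 ≤ i ≤ k−1. Then in R[t][x,y] one has det(A·x + B·y) = (−1)^{i(k−i)} · det P · det Q, where P is the i×i matrix with P_{r,s} = (A·x + B·y)_{r, (k−i)+s} and Q is the (k−i)×(k−i) matrix with Q_{r,s} = (A·x + B·y)_{i+r, s}; in particular det(A·x + B·y) is the product of two polynomials that are homogeneous of degrees i and k−i in the variables (x, y). -/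
open MvPolynomial

open Fin.NatCast in
private lemma rotpow_aux (n j : ℕ) (x : Fin (n+1)) :
    ((finRotate (n+1)) ^ j) x = x + (j : Fin (n+1)) := by
  induction j with
  | zero => simp
  | succ j ih =>
    rw [pow_succ', Equiv.Perm.mul_apply, ih, finRotate_succ_apply]
    push_cast
    rw [add_assoc]

open Fin.NatCast in
private lemma rotpow_val : ∀ (k : ℕ), 1 ≤ k → ∀ (j : ℕ) (x : Fin k),
    ((((finRotate k) ^ j) x : Fin k) : ℕ) = ((x : ℕ) + j) % k
  | 0, h => by omega
  | (n+1), _ => fun j x => by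
      rw [rotpow_aux, Fin.add_def, Fin.val_natCast]
      conv_rhs => rw [Nat.add_mod]
      rw [Nat.mod_eq_of_lt x.isLt]

private lemma sign_rotpow : ∀ (k : ℕ), 1 ≤ k → ∀ (j : ℕ),
    Equiv.Perm.sign ((finRotate k) ^ j) = (-1 : ℤˣ) ^ ((k - 1) * j)
  | 0, h => by omega
  | (n+1), _ => fun j => by
      rw [map_pow, sign_finRotate, ← pow_mul]

private lemma neg_one_pow_congr' {S : Type*} [Monoid S] [HasDistribNeg S]
    (a b : ℕ) (h : Even (a + b)) : (-1 : S) ^ a = (-1) ^ b := by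
  have h2 : (-1 : S) ^ (a + b) = 1 := h.neg_one_pow
  have h3 : (-1 : S) ^ b * (-1) ^ b = 1 := by
    rw [← pow_add]; exact (Even.add_self b).neg_one_pow
  calc (-1 : S) ^ a = (-1) ^ a * ((-1) ^ b * (-1) ^ b) := by rw [h3, mul_one]
    _ = ((-1) ^ a * (-1) ^ b) * (-1) ^ b := by rw [mul_assoc]
    _ = (-1) ^ (a + b) * (-1) ^ b := by rw [pow_add]
    _ = (-1) ^ b := by rw [h2, one_mul]

private lemma det_hom {R : Type*} [CommRing R] {ι : Type*} [Fintype ι] [DecidableEq ι]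
    (M : Matrix ι ι (MvPolynomial (Fin 2) R))
    (h : ∀ r c, (M r c).IsHomogeneous 1) : M.det.IsHomogeneous (Fintype.card ι) := by
  rw [Matrix.det_apply]
  apply MvPolynomial.IsHomogeneous.sum
  intro σ _
  have hp : (∏ x, M (σ x) x).IsHomogeneous (Fintype.card ι) := by
    have := MvPolynomial.IsHomogeneous.prod Finset.univ (fun x => M (σ x) x)
      (fun _ => 1) (fun x _ => h _ _)
    simpa [Finset.card_univ] using this
  rcases Int.units_eq_one_or (Equiv.Perm.sign σ) with hs | hs <;> rw [hs]
  · simpa using hp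
  · have hneg : (-1 : ℤˣ) • (∏ x, M (σ x) x) = -(∏ x, M (σ x) x) := by
      simp [Units.smul_def]
    rw [hneg, ← MvPolynomial.mem_homogeneousSubmodule] at *
    exact neg_mem hp

set_option maxHeartbeats 2000000 in
/-- Suppose `e₁ ≤ … ≤ e_k`, `f₁ ≤ … ≤ f_k` are nondecreasing integer tuples, `A`, `B` are
`k × k` matrices over `R[t]` with `deg A r c ≤ f r - e (k+1-c)` and
`deg B r c ≤ f r - e (k+1-c) + m` (with `deg 0 = -∞`, encoded by vanishing of coefficients
beyond the bound), and `f i < e (i+1) - m` for some `1 ≤ i ≤ k-1`.  Let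
`N = A·x + B·y` over `R[t][x,y]` (with `x = X 0`, `y = X 1`).  Then
`det N = (-1)^(i(k-i)) · det P · det Q` where `P r s = N r ((k-i)+s)` and `Q r s = N (i+r) s`
(`1`-indexed); in particular `det N` is the product of two polynomials homogeneous of degrees
`i` and `k - i` in `(x, y)`. -/
theorem stmt_5 {R : Type*} [CommRing R] (k : ℕ) (hk : 2 ≤ k) (m : ℕ)
    (e f : Fin k → ℤ) (he : Monotone e) (hf : Monotone f)
    (A B : Matrix (Fin k) (Fin k) (Polynomial R))
    (hA : ∀ r c : Fin k, ∀ n : ℕ, f r - e c.rev < (n : ℤ) → (A r c).coeff n = 0)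
    (hB : ∀ r c : Fin k, ∀ n : ℕ, f r - e c.rev + (m : ℤ) < (n : ℤ) → (B r c).coeff n = 0)
    (i : ℕ) (hi1 : 1 ≤ i) (hi2 : i ≤ k - 1)
    (hfe : f ⟨i - 1, by omega⟩ < e ⟨i, by omega⟩ - (m : ℤ))
    (N : Matrix (Fin k) (Fin k) (MvPolynomial (Fin 2) (Polynomial R)))
    (hN : N = Matrix.of fun r c : Fin k =>
      MvPolynomial.C (A r c) * MvPolynomial.X 0 + MvPolynomial.C (B r c) * MvPolynomial.X 1)
    (P : Matrix (Fin i) (Fin i) (MvPolynomial (Fin 2) (Polynomial R)))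
    (hP : ∀ r s : Fin i, P r s =
      N ⟨(r : ℕ), by have := r.isLt; omega⟩ ⟨k - i + (s : ℕ), by have := s.isLt; omega⟩)
    (Q : Matrix (Fin (k - i)) (Fin (k - i)) (MvPolynomial (Fin 2) (Polynomial R)))
    (hQ : ∀ r s : Fin (k - i), Q r s =
      N ⟨i + (r : ℕ), by have := r.isLt; omega⟩ ⟨(s : ℕ), by have := s.isLt; omega⟩) :
    N.det = (-1) ^ (i * (k - i)) * P.det * Q.det ∧
      P.det.IsHomogeneous i ∧ Q.det.IsHomogeneous (k - i) := by
  have hik : i + (k - i) = k := by omega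
  have hki1 : 1 ≤ k - i := by omega
  -- the zero block
  have hz : ∀ (r c : Fin k), (r : ℕ) < i → (c : ℕ) < k - i → N r c = 0 := by
    intro r c hr hc
    have hle1 : f r ≤ f ⟨i - 1, by omega⟩ := hf (by simp [Fin.le_def]; omega)
    have hle2 : e ⟨i, by omega⟩ ≤ e c.rev := by
      apply he
      have : ((c.rev : Fin k) : ℕ) = k - ((c : ℕ) + 1) := rfl
      simp only [Fin.le_def, this]
      omega
    have hAz : A r c = 0 := by
      ext n
      rw [Polynomial.coeff_zero]
      apply hA r c n
      have : (0 : ℤ) ≤ (n : ℤ) := Int.natCast_nonneg n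
      omega
    have hBz : B r c = 0 := by
      ext n
      rw [Polynomial.coeff_zero]
      apply hB r c n
      have : (0 : ℤ) ≤ (n : ℤ) := Int.natCast_nonneg n
      omega
    rw [hN]
    simp [hAz, hBz]
  -- equivalences
  set e1 : (Fin i ⊕ Fin (k - i)) ≃ Fin k := finSumFinEquiv.trans (finCongr hik) with he1
  set g : (Fin i ⊕ Fin (k - i)) ≃ Fin k :=
    (Equiv.sumComm (Fin i) (Fin (k - i))).trans
      (finSumFinEquiv.trans (finCongr (by omega : (k - i) + i = k))) with hg
  have he1l : ∀ s : Fin i, e1 (Sum.inl s) = ⟨(s : ℕ), by omega⟩ := by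
    intro s; apply Fin.ext; simp [he1]
  have he1r : ∀ s : Fin (k - i), e1 (Sum.inr s) = ⟨i + (s : ℕ), by omega⟩ := by
    intro s; apply Fin.ext; simp [he1]
  have hgl : ∀ s : Fin i, g (Sum.inl s) = ⟨k - i + (s : ℕ), by omega⟩ := by
    intro s; apply Fin.ext; simp [hg]
  have hgr : ∀ s : Fin (k - i), g (Sum.inr s) = ⟨(s : ℕ), by omega⟩ := by
    intro s; apply Fin.ext; simp [hg]
  -- the rotation
  set τ : Equiv.Perm (Fin k) := (finRotate k) ^ (k - i) with hτ
  have hτval : ∀ x : Fin k, (τ x : ℕ) = ((x : ℕ) + (k - i)) % k := by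
    intro x
    rw [hτ]
    exact rotpow_val k (by omega) (k - i) x
  have htg : ∀ c : Fin i ⊕ Fin (k - i), τ (e1 c) = g c := by
    rintro (s | s) <;> apply Fin.ext <;> rw [hτval]
    · rw [he1l, hgl]
      simp only
      rw [Nat.mod_eq_of_lt (by omega)]
      omega
    · rw [he1r, hgr]
      simp only
      have hs := s.isLt
      have : i + (s : ℕ) + (k - i) = k + (s : ℕ) := by omega
      rw [this, Nat.add_mod_left, Nat.mod_eq_of_lt (by omega)]
  -- the block matrix
  set S : Matrix (Fin (k - i)) (Fin i) (MvPolynomial (Fin 2) (Polynomial R)) :=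
    fun r s => N ⟨i + (r : ℕ), by omega⟩ ⟨k - i + (s : ℕ), by omega⟩ with hS
  have hM : N.submatrix e1 g = Matrix.fromBlocks P 0 S Q := by
    refine Matrix.ext fun z c => ?_
    rcases z with r | r <;> rcases c with s | s <;>
      simp only [Matrix.submatrix_apply, Matrix.fromBlocks_apply₁₁,
        Matrix.fromBlocks_apply₁₂, Matrix.fromBlocks_apply₂₁, Matrix.fromBlocks_apply₂₂]
    · rw [he1l, hgl, hP]
    · rw [he1l, hgr, Matrix.zero_apply]
      apply hz
      · exact r.isLt
      · exact s.isLt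
    · rw [he1r, hgl, hS]
    · rw [he1r, hgr, hQ]
  have hM2 : N.submatrix e1 g = (N.submatrix id τ).submatrix e1 e1 := by
    refine Matrix.ext fun z c => ?_
    simp only [Matrix.submatrix_apply, id_eq, htg c]
  -- determinant computation
  have hdet1 : (N.submatrix e1 g).det = P.det * Q.det := by
    rw [hM, Matrix.det_fromBlocks_zero₁₂]
  have hdet2 : (N.submatrix e1 g).det =
      ((Equiv.Perm.sign τ : ℤ) : MvPolynomial (Fin 2) (Polynomial R)) * N.det := by
    rw [hM2, Matrix.det_submatrix_equiv_self, Matrix.det_permute']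
  have hsign : ((Equiv.Perm.sign τ : ℤ) : MvPolynomial (Fin 2) (Polynomial R)) =
      (-1) ^ (i * (k - i)) := by
    rw [hτ, sign_rotpow k (by omega)]
    push_cast
    apply neg_one_pow_congr' (S := MvPolynomial (Fin 2) (Polynomial R))
    have hpar : Even ((k - 1) * (k - i) + i * (k - i)) := by
      have heq : (k - 1) * (k - i) + i * (k - i) = (k - 1 + i) * (k - i) :=
        (Nat.add_mul _ _ _).symm
      rw [heq]
      rcases Nat.even_or_odd (k - i) with hp | hp
      · exact hp.mul_left _
      · have h2 : Even (k - 1 + i) := by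
          rw [Nat.even_iff]
          have := Nat.odd_iff.mp hp
          omega
        exact h2.mul_right _
    exact hpar
  have hsq : ((-1 : MvPolynomial (Fin 2) (Polynomial R)) ^ (i * (k - i))) *
      ((-1) ^ (i * (k - i))) = 1 := by
    rw [← pow_add]
    have hev : Even (i * (k - i) + i * (k - i)) := ⟨_, rfl⟩
    exact hev.neg_one_pow (α := MvPolynomial (Fin 2) (Polynomial R))
  have key : (-1 : MvPolynomial (Fin 2) (Polynomial R)) ^ (i * (k - i)) * N.det =
      P.det * Q.det := by
    rw [← hsign, ← hdet2, hdet1]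
  have hdetN : N.det = (-1) ^ (i * (k - i)) * P.det * Q.det := by
    calc N.det = ((-1) ^ (i * (k - i)) * (-1) ^ (i * (k - i))) * N.det := by
          rw [hsq, one_mul]
      _ = (-1) ^ (i * (k - i)) * ((-1) ^ (i * (k - i)) * N.det) := by rw [mul_assoc]
      _ = (-1) ^ (i * (k - i)) * (P.det * Q.det) := by rw [key]
      _ = (-1) ^ (i * (k - i)) * P.det * Q.det := by rw [← mul_assoc]
  -- homogeneity
  have hhom : ∀ r c : Fin k, (N r c).IsHomogeneous 1 := by
    intro r c
    rw [hN]
    simp only [Matrix.of_apply]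
    exact (MvPolynomial.isHomogeneous_C_mul_X _ _).add (MvPolynomial.isHomogeneous_C_mul_X _ _)
  refine ⟨hdetN, ?_, ?_⟩
  · have := det_hom P (fun r s => by rw [hP]; exact hhom _ _)
    simpa using this
  · have := det_hom Q (fun r s => by rw [hQ]; exact hhom _ _)
    simpa using this
end

section
/- Let F be an algebraically closed field, n ≥ 1, and d_1, …, d_n ≥ 0 integers. There exist nonzero homogeneous polynomials Q_1, …, Q_n ∈ F[s,t] with deg Q_i = d_i such that the F-linear map sending an n-tuple (Q_1', …, Q_n'), where each Q_i' ∈ F[s,t] is homogeneous of degree d_i, to Σ_{i=1}^{n} Q_1⋯Q_{i−1}·Q_i'·Q_{i+1}⋯Q_n is surjective onto the space of homogeneous polynomials of degree d_1 + ⋯ + d_n in F[s,t]. -/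
open Polynomial

namespace Stmt9Aux

variable {F : Type*} [Field F]

/-- Dehomogenization: substitute `X 0 ↦ X`, `X 1 ↦ 1`. -/
noncomputable def deh : MvPolynomial (Fin 2) F →ₐ[F] Polynomial F :=
  MvPolynomial.aeval ![Polynomial.X, 1]

/-- Homogenization to degree `m`. -/
noncomputable def hg (m : ℕ) (p : Polynomial F) : MvPolynomial (Fin 2) F :=
  ∑ k ∈ Finset.range (m + 1),
    MvPolynomial.C (p.coeff k) * MvPolynomial.X 0 ^ k * MvPolynomial.X 1 ^ (m - k)

lemma hg_isHomogeneous (m : ℕ) (p : Polynomial F) : (hg m p).IsHomogeneous m := by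
  refine MvPolynomial.IsHomogeneous.sum _ _ _ fun k hk => ?_
  have hk' : k ≤ m := Nat.lt_succ_iff.mp (Finset.mem_range.mp hk)
  have : (MvPolynomial.X (R := F) (0 : Fin 2) ^ k * MvPolynomial.X 1 ^ (m - k)).IsHomogeneous
      (k + (m - k)) :=
    (MvPolynomial.isHomogeneous_X_pow _ _).mul (MvPolynomial.isHomogeneous_X_pow _ _)
  rw [Nat.add_sub_cancel' hk'] at this
  rw [mul_assoc]
  exact this.C_mul _

lemma deh_hg {m : ℕ} {p : Polynomial F} (hp : p.natDegree ≤ m) : deh (hg m p) = p := by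
  rw [hg, map_sum]
  have : ∀ k ∈ Finset.range (m + 1),
      deh (MvPolynomial.C (p.coeff k) * MvPolynomial.X (0:Fin 2) ^ k
        * MvPolynomial.X 1 ^ (m - k)) = Polynomial.monomial k (p.coeff k) := by
    intro k _
    simp [deh, Polynomial.C_mul_X_pow_eq_monomial]
  rw [Finset.sum_congr rfl this]
  exact (p.as_sum_range' (m + 1) (Nat.lt_succ_of_le hp)).symm

lemma hg_C_mul_X_pow {m k : ℕ} (hk : k ≤ m) (c : F) :
    hg m (Polynomial.C c * Polynomial.X ^ k)
      = MvPolynomial.C c * MvPolynomial.X 0 ^ k * MvPolynomial.X 1 ^ (m - k) := by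
  rw [hg]
  have : ∀ j ∈ Finset.range (m + 1),
      MvPolynomial.C ((Polynomial.C c * Polynomial.X ^ k).coeff j) * MvPolynomial.X (0:Fin 2) ^ j
        * MvPolynomial.X 1 ^ (m - j)
      = if j = k then MvPolynomial.C c * MvPolynomial.X 0 ^ k * MvPolynomial.X 1 ^ (m - k)
        else 0 := by
    intro j _
    by_cases h : j = k <;> simp [h, Polynomial.coeff_X_pow]
  rw [Finset.sum_congr rfl this, Finset.sum_ite_eq' (Finset.range (m+1)) k]
  simp [Nat.lt_succ_of_le hk]

lemma monomial_eq_fin2 (u : Fin 2 →₀ ℕ) (c : F) :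
    MvPolynomial.monomial u c
      = MvPolynomial.C c * MvPolynomial.X 0 ^ (u 0) * MvPolynomial.X 1 ^ (u 1) := by
  rw [MvPolynomial.monomial_eq, mul_assoc]
  congr 1
  rw [Finsupp.prod_fintype _ _ (fun i => pow_zero _)]
  exact Fin.prod_univ_two _

lemma deh_monomial (u : Fin 2 →₀ ℕ) (c : F) :
    deh (MvPolynomial.monomial u c) = Polynomial.C c * Polynomial.X ^ (u 0) := by
  rw [monomial_eq_fin2]
  simp [deh]

lemma degree_eq_of_mem_support {P : MvPolynomial (Fin 2) F} {m : ℕ}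
    (hP : P.IsHomogeneous m) {u : Fin 2 →₀ ℕ} (hu : u ∈ P.support) : u 0 + u 1 = m := by
  have := hP (MvPolynomial.mem_support_iff.mp hu)
  rw [← this]
  simp [Finsupp.weight, Finsupp.linearCombination, Finsupp.sum_fintype, Fin.sum_univ_two]

lemma hg_additive (m : ℕ) {ι : Type*} (s : Finset ι) (f : ι → Polynomial F) :
    hg m (∑ i ∈ s, f i) = ∑ i ∈ s, hg m (f i) := by
  simp only [hg, Polynomial.finset_sum_coeff, map_sum, Finset.sum_mul]
  exact Finset.sum_comm

lemma hg_deh {m : ℕ} {P : MvPolynomial (Fin 2) F} (hP : P.IsHomogeneous m) :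
    hg m (deh P) = P := by
  conv_rhs => rw [← MvPolynomial.support_sum_monomial_coeff P]
  conv_lhs => rw [← MvPolynomial.support_sum_monomial_coeff P]
  rw [map_sum, hg_additive]
  refine Finset.sum_congr rfl fun u hu => ?_
  have h01 : u 0 + u 1 = m := degree_eq_of_mem_support hP hu
  rw [deh_monomial, hg_C_mul_X_pow (le_of_add_le_left h01.le) , monomial_eq_fin2]
  congr 2
  omega

lemma natDegree_deh_le {m : ℕ} {P : MvPolynomial (Fin 2) F} (hP : P.IsHomogeneous m) :
    (deh P).natDegree ≤ m := by
  conv_lhs => rw [← MvPolynomial.support_sum_monomial_coeff P]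
  rw [map_sum]
  refine Polynomial.natDegree_sum_le_of_forall_le _ _ fun u hu => ?_
  rw [deh_monomial]
  refine le_trans (Polynomial.natDegree_C_mul_le _ _) ?_
  rw [Polynomial.natDegree_X_pow]
  have := degree_eq_of_mem_support hP hu
  omega

lemma key [IsAlgClosed F] : ∀ n : ℕ, 1 ≤ n → ∀ d : Fin n → ℕ,
    ∃ q : Fin n → Polynomial F, (∀ i, q i ≠ 0 ∧ (q i).natDegree ≤ d i) ∧
      ∀ p : Polynomial F, p.natDegree ≤ ∑ i, d i →
        ∃ q' : Fin n → Polynomial F, (∀ i, (q' i).natDegree ≤ d i) ∧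
          ∑ i, q' i * ∏ j ∈ Finset.univ.erase i, q j = p := by
  classical
  refine Nat.le_induction ?_ ?_
  · intro d
    refine ⟨fun _ => 1, fun i => ⟨one_ne_zero, by simp⟩, fun p hp => ?_⟩
    refine ⟨fun _ => p, fun i => ?_, ?_⟩
    · rw [Fin.eq_zero i]; simpa [Fin.sum_univ_one] using hp
    · simp [Fin.sum_univ_one]
  · intro n hn IH d
    obtain ⟨q, hq, hs⟩ := IH (d ∘ Fin.castSucc)
    set r : Polynomial F := ∏ i, q i with hr
    have hr0 : r ≠ 0 := Finset.prod_ne_zero_iff.mpr fun i _ => (hq i).1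
    obtain ⟨a, ha⟩ := Infinite.exists_notMem_finset r.roots.toFinset
    have heval : r.eval a ≠ 0 := by
      intro h
      exact ha (Multiset.mem_toFinset.mpr (Polynomial.mem_roots'.mpr ⟨hr0, h⟩))
    set e := d (Fin.last n) with he
    set B : Polynomial F := (Polynomial.X - Polynomial.C a) ^ e with hB
    have hBm : B.Monic := (Polynomial.monic_X_sub_C a).pow e
    have hB0 : B ≠ 0 := hBm.ne_zero
    have hBdeg : B.natDegree = e := by
      rw [hB, Polynomial.natDegree_pow, Polynomial.natDegree_X_sub_C, mul_one]
    have hco : IsCoprime B r := by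
      refine IsCoprime.pow_left ?_
      refine (Polynomial.irreducible_X_sub_C a).coprime_iff_not_dvd.mpr ?_
      rw [Polynomial.dvd_iff_isRoot]
      exact heval
    set Q : Fin (n+1) → Polynomial F := Fin.snoc q B with hQdef
    have hQlast : Q (Fin.last n) = B := by simp [hQdef]
    have hQcs : ∀ i : Fin n, Q i.castSucc = q i := by intro i; simp [hQdef]
    have hrdeg : r.natDegree ≤ ∑ i, d (Fin.castSucc i) := by
      refine le_trans (Polynomial.natDegree_prod_le _ _) ?_
      exact Finset.sum_le_sum fun i _ => (hq i).2
    -- erase-product identities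
    have hprodQ : ∏ j, Q j = r * B := by
      rw [Fin.prod_univ_castSucc]
      simp [hQcs, hQlast, hr]
    have herase_last : ∏ j ∈ Finset.univ.erase (Fin.last n), Q j = r := by
      have h1 : (∏ j ∈ Finset.univ.erase (Fin.last n), Q j) * Q (Fin.last n) = ∏ j, Q j :=
        Finset.prod_erase_mul _ _ (Finset.mem_univ _)
      rw [hprodQ, hQlast] at h1
      exact mul_right_cancel₀ hB0 h1
    have herase_cs : ∀ i : Fin n, ∏ j ∈ Finset.univ.erase i.castSucc, Q j
        = (∏ j ∈ Finset.univ.erase i, q j) * B := by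
      intro i
      have h1 : (∏ j ∈ Finset.univ.erase i.castSucc, Q j) * Q i.castSucc = ∏ j, Q j :=
        Finset.prod_erase_mul _ _ (Finset.mem_univ _)
      have h2 : ((∏ j ∈ Finset.univ.erase i, q j) * B) * q i = r * B := by
        rw [hr, ← Finset.prod_erase_mul Finset.univ q (Finset.mem_univ i)]; ring
      rw [hprodQ, hQcs] at h1
      exact mul_right_cancel₀ (hq i).1 (h1.trans h2.symm)
    refine ⟨Q, ?_, ?_⟩
    · intro i
      induction i using Fin.lastCases with
      | last => exact ⟨by rw [hQlast]; exact hB0, by rw [hQlast, ← he]; exact hBdeg.le⟩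
      | cast i => exact ⟨by rw [hQcs]; exact (hq i).1, by rw [hQcs]; exact (hq i).2⟩
    · intro p hp
      rw [Fin.sum_univ_castSucc] at hp
      obtain ⟨u, w, hbez⟩ := hco
      set v : Polynomial F := (p * w) %ₘ B with hv
      have hvdeg : v.natDegree ≤ e := hBdeg ▸ Polynomial.natDegree_modByMonic_le _ hBm
      set c : Polynomial F := p * u + ((p * w) /ₘ B) * r with hc
      have hmd : v + B * ((p * w) /ₘ B) = p * w := Polynomial.modByMonic_add_div _ B
      have hkey : v * r + c * B = p := by
        rw [hc]; linear_combination r * hmd + p * hbez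
      have hcdeg : c.natDegree ≤ ∑ i, d (Fin.castSucc i) := by
        by_cases hc0 : c = 0
        · simp [hc0]
        have h1 : c * B = p - v * r := by linear_combination hkey
        have h2 : (p - v * r).natDegree ≤ (∑ i, d (Fin.castSucc i)) + e := by
          refine le_trans (Polynomial.natDegree_sub_le _ _) ?_
          refine max_le hp ?_
          refine le_trans (Polynomial.natDegree_mul_le) ?_
          omega
        rw [← h1, Polynomial.natDegree_mul hc0 hB0, hBdeg] at h2
        omega
      obtain ⟨q', hq'deg, hq'sum⟩ := hs c hcdeg
      refine ⟨Fin.snoc q' v, ?_, ?_⟩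
      · intro i
        induction i using Fin.lastCases with
        | last => simpa using hvdeg
        | cast i => simpa using hq'deg i
      · rw [Fin.sum_univ_castSucc]
        simp only [Fin.snoc_castSucc, Fin.snoc_last, herase_last, herase_cs]
        calc (∑ i : Fin n, q' i * ((∏ j ∈ Finset.univ.erase i, q j) * B)) + v * r
            = (∑ i : Fin n, q' i * ∏ j ∈ Finset.univ.erase i, q j) * B + v * r := by
              rw [Finset.sum_mul]; simp only [mul_assoc]
          _ = c * B + v * r := by rw [hq'sum]
          _ = p := by linear_combination hkey

theorem stmt9main {F : Type*} [Field F] [IsAlgClosed F] (n : ℕ) (hn : 1 ≤ n)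
    (d : Fin n → ℕ) :
    ∃ Q : Fin n → MvPolynomial (Fin 2) F,
      (∀ i, Q i ≠ 0 ∧ (Q i).IsHomogeneous (d i)) ∧
      ∀ P : MvPolynomial (Fin 2) F, P.IsHomogeneous (∑ i, d i) →
        ∃ Q' : Fin n → MvPolynomial (Fin 2) F,
          (∀ i, (Q' i).IsHomogeneous (d i)) ∧
          ∑ i, (Q' i * ∏ j ∈ Finset.univ.erase i, Q j) = P := by
  obtain ⟨q, hq, hs⟩ := key (F := F) n hn d
  refine ⟨fun i => hg (d i) (q i), fun i => ⟨?_, hg_isHomogeneous _ _⟩, ?_⟩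
  · intro h
    apply (hq i).1
    have h2 : hg (d i) (q i) = 0 := h
    have := deh_hg (hq i).2
    rw [h2, map_zero] at this
    exact this.symm
  · intro P hP
    obtain ⟨q', hq'deg, hq'sum⟩ := hs (deh P) (natDegree_deh_le hP)
    refine ⟨fun i => hg (d i) (q' i), fun i => hg_isHomogeneous _ _, ?_⟩
    set S : MvPolynomial (Fin 2) F :=
      ∑ i, (hg (d i) (q' i) * ∏ j ∈ Finset.univ.erase i, hg (d j) (q j)) with hS
    have hShom : S.IsHomogeneous (∑ i, d i) := by
      refine MvPolynomial.IsHomogeneous.sum _ _ _ fun i _ => ?_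
      have := (hg_isHomogeneous (d i) (q' i)).mul
        (MvPolynomial.IsHomogeneous.prod (Finset.univ.erase i) (fun j => hg (d j) (q j)) (fun j => d j)
          (fun j _ => hg_isHomogeneous _ _))
      rwa [Finset.add_sum_erase _ _ (Finset.mem_univ i)] at this
    have hdehS : deh S = deh P := by
      rw [hS, map_sum]
      rw [← hq'sum]
      refine Finset.sum_congr rfl fun i _ => ?_
      rw [map_mul, map_prod, deh_hg (hq'deg i)]
      congr 1
      exact Finset.prod_congr rfl fun j _ => deh_hg (hq j).2
    calc S = hg (∑ i, d i) (deh S) := (hg_deh hShom).symm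
      _ = hg (∑ i, d i) (deh P) := by rw [hdehS]
      _ = P := hg_deh hP
end Stmt9Aux

/-- Lemma 3.5 (existence form): there exist nonzero binary forms `Q₁, …, Qₙ` of degrees
`d₁, …, dₙ` over an algebraically closed field `F` such that the linear map
`(Q₁', …, Qₙ') ↦ Σᵢ Q₁⋯Q_{i-1}·Qᵢ'·Q_{i+1}⋯Qₙ` (with `Qᵢ'` homogeneous of degree `dᵢ`)
is surjective onto the binary forms of degree `d₁ + ⋯ + dₙ`. -/
theorem stmt_9 {F : Type*} [Field F] [IsAlgClosed F] (n : ℕ) (hn : 1 ≤ n)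
    (d : Fin n → ℕ) :
    ∃ Q : Fin n → MvPolynomial (Fin 2) F,
      (∀ i, Q i ≠ 0 ∧ (Q i).IsHomogeneous (d i)) ∧
      ∀ P : MvPolynomial (Fin 2) F, P.IsHomogeneous (∑ i, d i) →
        ∃ Q' : Fin n → MvPolynomial (Fin 2) F,
          (∀ i, (Q' i).IsHomogeneous (d i)) ∧
          ∑ i, (Q' i * ∏ j ∈ Finset.univ.erase i, Q j) = P := by
  exact Stmt9Aux.stmt9main n hn d
end

section
/- Let F be an algebraically closed field and f, g ∈ F[t] nonzero squarefree polynomials with no common factor (gcd(f, g) = 1). Let a, b be nonnegative integers with a + b = deg f + deg g and a ≥ deg g. Then there exist A, B ∈ F[t] with deg A ≤ a and deg B ≤ b such that the F-linear map from {(A', B') : A', B' ∈ F[t], deg A' ≤ a, deg B' ≤ b} to (F[t]/(f)) × (F[t]/(g)) sending (A', B') to (the residue class of A'·B + B'·A modulo f, the residue class of A' modulo g) is surjective. -/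
open Polynomial

/-- A monic divisor of each given degree `b ≤ natDegree f` exists when `f` splits. -/
lemma exists_monic_dvd_natDegree {F : Type*} [Field F] [IsAlgClosed F]
    (f : Polynomial F) (hf0 : f ≠ 0) (b : ℕ) (hb : b ≤ f.natDegree) :
    ∃ f₁ : Polynomial F, f₁.Monic ∧ f₁ ∣ f ∧ f₁.natDegree = b := by
  have hcard : f.roots.card = f.natDegree :=
    (Polynomial.splits_iff_card_roots).1 (IsAlgClosed.splits f)
  set s : Multiset F := ((f.roots.toList.take b : List F) : Multiset F) with hs
  have hsle : s ≤ f.roots := by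
    have h1 : ((f.roots.toList.take b : List F) : Multiset F) ≤ (f.roots.toList : Multiset F) :=
      Multiset.coe_le.2 (List.take_sublist b _).subperm
    simpa [Multiset.coe_toList] using h1
  have hscard : s.card = b := by
    rw [hs, Multiset.coe_card, List.length_take]
    simp [Multiset.length_toList, hcard, hb, min_eq_left]
  refine ⟨(s.map fun r => X - C r).prod, ?_, ?_, ?_⟩
  · exact monic_multiset_prod_of_monic _ _ fun r _ => monic_X_sub_C r
  · exact dvd_trans (Multiset.prod_dvd_prod_of_le (Multiset.map_le_map hsle))
      (prod_multiset_X_sub_C_dvd f)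
  · rw [natDegree_multiset_prod_X_sub_C_eq_card, hscard]

/-- The final lemma of Section 3 (existence form): for squarefree coprime `f, g ∈ F[t]` and
`a + b = deg f + deg g` with `a ≥ deg g`, there exist `A, B` of degrees `≤ a, ≤ b` such that
`(A', B') ↦ (A'·B + B'·A mod f, A' mod g)`, on pairs with `deg A' ≤ a` and `deg B' ≤ b`,
is surjective onto `F[t]/(f) × F[t]/(g)`. -/
theorem stmt_12 {F : Type*} [Field F] [IsAlgClosed F]
    (f g : Polynomial F) (hf0 : f ≠ 0) (hg0 : g ≠ 0)
    (hf : Squarefree f) (hg : Squarefree g) (hfg : IsCoprime f g)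
    (a b : ℕ) (hab : a + b = f.natDegree + g.natDegree) (hag : g.natDegree ≤ a) :
    ∃ A B : Polynomial F, A.natDegree ≤ a ∧ B.natDegree ≤ b ∧
      ∀ (u : Polynomial F ⧸ Ideal.span {f}) (v : Polynomial F ⧸ Ideal.span {g}),
        ∃ A' B' : Polynomial F, A'.natDegree ≤ a ∧ B'.natDegree ≤ b ∧
          Ideal.Quotient.mk (Ideal.span {f}) (A' * B + B' * A) = u ∧
          Ideal.Quotient.mk (Ideal.span {g}) A' = v := by
  classical
  -- normalize f and g to monic polynomials
  set f' : Polynomial F := f * C f.leadingCoeff⁻¹ with hf'def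
  have hf'monic : f'.Monic := monic_mul_leadingCoeff_inv hf0
  have hcne : f.leadingCoeff ≠ 0 := leadingCoeff_ne_zero.2 hf0
  have hff' : f ∣ f' := Dvd.intro _ rfl
  have hf'f : f' ∣ f := ⟨C f.leadingCoeff, by
    rw [hf'def, mul_assoc, ← C_mul, inv_mul_cancel₀ hcne, C_1, mul_one]⟩
  have hf'deg : f'.natDegree = f.natDegree := by
    rw [hf'def, natDegree_mul hf0 (by simpa using inv_ne_zero hcne), natDegree_C, add_zero]
  have hf'sf : Squarefree f' := hf.squarefree_of_dvd hf'f
  set g' : Polynomial F := g * C g.leadingCoeff⁻¹ with hg'def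
  have hg'monic : g'.Monic := monic_mul_leadingCoeff_inv hg0
  have hdne : g.leadingCoeff ≠ 0 := leadingCoeff_ne_zero.2 hg0
  have hgg' : g ∣ g' := Dvd.intro _ rfl
  have hg'deg : g'.natDegree = g.natDegree := by
    rw [hg'def, natDegree_mul hg0 (by simpa using inv_ne_zero hdne), natDegree_C, add_zero]
  -- choose a monic divisor f₁ of f' of degree b, and its complement f₂
  have hb : b ≤ f'.natDegree := by omega
  obtain ⟨f₁, hf₁monic, hf₁dvd, hf₁deg⟩ := exists_monic_dvd_natDegree f'
    (hf'monic.ne_zero) b hb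
  obtain ⟨f₂, hf₂eq⟩ := hf₁dvd
  have hf₁ne : f₁ ≠ 0 := hf₁monic.ne_zero
  have hf₂monic : f₂.Monic := hf₁monic.of_mul_monic_left (hf₂eq ▸ hf'monic)
  have hf₂ne : f₂ ≠ 0 := hf₂monic.ne_zero
  have hf₂deg : f₂.natDegree = f'.natDegree - b := by
    have := natDegree_mul hf₁ne hf₂ne
    rw [← hf₂eq] at this; omega
  -- coprimality facts
  have hcop12 : IsCoprime f₁ f₂ := by
    have h := (squarefree_mul_iff.1 (hf₂eq ▸ hf'sf)).1
    exact h.isCoprime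
  have hcopg2 : IsCoprime g f₂ := hfg.symm.of_isCoprime_of_dvd_right
    (Dvd.dvd.trans ⟨f₁, by rw [hf₂eq, mul_comm]⟩ hf'f)
  have hcopgf₁2 : IsCoprime (g * f₁) f₂ := hcopg2.mul_left hcop12
  obtain ⟨x, y, hxy⟩ := hcop12.symm
  obtain ⟨x₂, y₂, hxy₂⟩ := hcopgf₁2
  refine ⟨f₂, f₁, by rw [hf₂deg]; omega, le_of_eq hf₁deg, ?_⟩
  intro u v
  obtain ⟨u₀, rfl⟩ := Ideal.Quotient.mk_surjective u
  obtain ⟨v₀', rfl⟩ := Ideal.Quotient.mk_surjective v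
  set v₀ : Polynomial F := v₀' %ₘ g' with hv₀def
  have hv₀mk : Ideal.Quotient.mk (Ideal.span {g}) v₀ = Ideal.Quotient.mk _ v₀' := by
    rw [Ideal.Quotient.eq, hv₀def, modByMonic_eq_sub_mul_div _ g']
    exact Ideal.mem_span_singleton.2 ⟨-(C g.leadingCoeff⁻¹ * (v₀' /ₘ g')),
      by rw [hg'def]; ring⟩
  set w : Polynomial F := u₀ - v₀ * f₁ with hwdef
  set B' : Polynomial F := (w * x) %ₘ f₁ with hB'def
  set C' : Polynomial F := (w * x₂) %ₘ f₂ with hC'def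
  set A' : Polynomial F := v₀ + g * C' with hA'def
  -- degree bounds
  have hB'deg : B'.natDegree ≤ b := by
    rcases eq_or_ne B' 0 with h | h
    · simp [h]
    · have := degree_modByMonic_lt (w * x) hf₁monic
      rw [← hB'def] at this
      have h2 : B'.degree ≤ (b : WithBot ℕ) := le_of_lt (by
        rwa [degree_eq_natDegree hf₁ne, hf₁deg] at this)
      exact natDegree_le_iff_degree_le.2 h2
  have hC'deg : C' = 0 ∨ C'.natDegree < f₂.natDegree := by
    rcases eq_or_ne C' 0 with h | h
    · exact Or.inl h
    · right
      have := degree_modByMonic_lt (w * x₂) hf₂monic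
      rw [← hC'def] at this
      exact natDegree_lt_natDegree h this
  have hv₀deg : v₀ = 0 ∨ v₀.natDegree < g.natDegree := by
    rcases eq_or_ne v₀ 0 with h | h
    · exact Or.inl h
    · right
      have := degree_modByMonic_lt v₀' hg'monic
      rw [← hv₀def] at this
      have := natDegree_lt_natDegree h this
      omega
  have hA'deg : A'.natDegree ≤ a := by
    have h1 : v₀.natDegree ≤ a := by
      rcases hv₀deg with h | h
      · simp [h]
      · omega
    have h2 : (g * C').natDegree ≤ a := by
      rcases hC'deg with h | h
      · simp [h]
      · rcases eq_or_ne C' 0 with h0 | h0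
        · simp [h0]
        · rw [natDegree_mul hg0 h0]; omega
    exact le_trans (natDegree_add_le _ _) (by omega)
  refine ⟨A', B', hA'deg, hB'deg, ?_, ?_⟩
  · -- first component
    rw [Ideal.Quotient.eq]
    refine Ideal.mem_span_singleton.2 ?_
    have key : f₁ * f₂ ∣ A' * f₁ + B' * f₂ - u₀ := by
      have hexp : A' * f₁ + B' * f₂ - u₀ = (C' * (g * f₁) + B' * f₂) - w := by
        rw [hA'def, hwdef]; ring
      rw [hexp]
      refine hcop12.mul_dvd ?_ ?_
      · -- f₁ ∣ ...
        have h1 : f₁ ∣ B' * f₂ - w := by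
          have heq : B' * f₂ - w = (w * x) * f₂ - f₁ * ((w * x) /ₘ f₁) * f₂ - w := by
            rw [hB'def, modByMonic_eq_sub_mul_div _ f₁]; ring
          rw [heq]
          have hd : f₁ ∣ x * f₂ - 1 := ⟨-y, by linear_combination hxy⟩
          obtain ⟨z, hz⟩ := hd
          exact ⟨w * z - (w * x) /ₘ f₁ * f₂, by linear_combination w * hz⟩
        have heq2 : C' * (g * f₁) + B' * f₂ - w = C' * g * f₁ + (B' * f₂ - w) := by ring
        rw [heq2]
        exact dvd_add ⟨C' * g, by ring⟩ h1
      · -- f₂ ∣ ...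
        have h1 : f₂ ∣ C' * (g * f₁) - w := by
          have heq : C' * (g * f₁) - w
              = (w * x₂) * (g * f₁) - f₂ * ((w * x₂) /ₘ f₂) * (g * f₁) - w := by
            rw [hC'def, modByMonic_eq_sub_mul_div _ f₂]; ring
          rw [heq]
          have hd : f₂ ∣ x₂ * (g * f₁) - 1 := ⟨-y₂, by linear_combination hxy₂⟩
          obtain ⟨z, hz⟩ := hd
          exact ⟨w * z - (w * x₂) /ₘ f₂ * (g * f₁), by linear_combination w * hz⟩
        have heq2 : C' * (g * f₁) + B' * f₂ - w = (C' * (g * f₁) - w) + B' * f₂ := by ring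
        rw [heq2]
        exact dvd_add h1 ⟨B', mul_comm _ _⟩
    have hf'dvd : f' ∣ A' * f₁ + B' * f₂ - u₀ := hf₂eq ▸ key
    exact dvd_trans hff' hf'dvd
  · -- second component
    rw [← hv₀mk, Ideal.Quotient.eq]
    exact Ideal.mem_span_singleton.2 ⟨C', by rw [hA'def]; ring⟩
end

section
/- Let k ≥ 1 and let m, δ, e_1, …, e_k be integers. There exist integers f_1, …, f_k satisfying f_i ≥ e_i for all 1 ≤ i ≤ k, f_i ≥ e_{i+1} − m for all 1 ≤ i ≤ k−1, and Σ_{i=1}^{k} (f_i − e_i) = δ, if and only if Σ_{i=1}^{k−1} max(0, e_{i+1} − e_i − m) ≤ δ. -/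
lemma aux13 (n : ℕ) (m δ : ℤ) (e : Fin (n + 1) → ℤ) :
    (∃ f : Fin (n + 1) → ℤ,
      (∀ i, e i ≤ f i) ∧
      (∀ j : Fin n, e j.succ - m ≤ f j.castSucc) ∧
      ∑ i, (f i - e i) = δ) ↔
    ∑ j : Fin n, max 0 (e j.succ - e j.castSucc - m) ≤ δ := by
  constructor
  · rintro ⟨f, h1, h2, h3⟩
    rw [Fin.sum_univ_castSucc] at h3
    have key : ∀ j : Fin n,
        max 0 (e j.succ - e j.castSucc - m) ≤ f j.castSucc - e j.castSucc := by
      intro j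
      have h1' := h1 j.castSucc
      have h2' := h2 j
      simp only [max_le_iff]
      constructor <;> omega
    have hsum := Finset.sum_le_sum (s := Finset.univ) (fun j _ => key j)
    have hlast := h1 (Fin.last n)
    linarith
  · intro hδ
    set S : ℤ := ∑ j : Fin n, max 0 (e j.succ - e j.castSucc - m) with hS
    set g : Fin (n + 1) → ℤ :=
      Fin.snoc (fun j : Fin n => max 0 (e j.succ - e j.castSucc - m)) (δ - S) with hg
    refine ⟨fun i => e i + g i, ?_, ?_, ?_⟩
    · intro i
      induction i using Fin.lastCases with
      | last => simp [hg, Fin.snoc_last]; omega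
      | cast j =>
        have : (0:ℤ) ≤ g j.castSucc := by
          rw [hg, Fin.snoc_castSucc]; exact le_max_left _ _
        dsimp only
        omega
    · intro j
      have : e j.succ - e j.castSucc - m ≤ g j.castSucc := by
        rw [hg, Fin.snoc_castSucc]; exact le_max_right _ _
      dsimp only
      omega
    · have : ∀ i, (e i + g i) - e i = g i := fun i => by ring
      rw [Finset.sum_congr rfl fun i _ => this i, Fin.sum_univ_castSucc]
      simp only [hg, Fin.snoc_castSucc, Fin.snoc_last, ← hS]
      ring

/-- Integer combinatorics behind Corollary 1.7: there exist integers `f₁, …, f_k` with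
`fᵢ ≥ eᵢ`, `fᵢ ≥ e_{i+1} - m` (for `1 ≤ i ≤ k-1`) and `Σ (fᵢ - eᵢ) = δ` if and only if
`Σ_{i=1}^{k-1} max 0 (e_{i+1} - eᵢ - m) ≤ δ`. -/
theorem stmt_13 (k : ℕ) (hk : 1 ≤ k) (m δ : ℤ) (e : Fin k → ℤ) :
    (∃ f : Fin k → ℤ,
      (∀ i, e i ≤ f i) ∧
      (∀ i : Fin k, ∀ h : (i : ℕ) + 1 < k, e ⟨(i : ℕ) + 1, h⟩ - m ≤ f i) ∧
      ∑ i, (f i - e i) = δ) ↔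
    ∑ i : Fin (k - 1),
      max 0 (e ⟨(i : ℕ) + 1, by have := i.isLt; omega⟩ -
        e ⟨(i : ℕ), by have := i.isLt; omega⟩ - m) ≤ δ := by
  obtain ⟨n, rfl⟩ : ∃ n, k = n + 1 := ⟨k - 1, by omega⟩
  have hR : (∑ i : Fin (n + 1 - 1),
      max 0 (e ⟨(i : ℕ) + 1, by have := i.isLt; omega⟩ -
        e ⟨(i : ℕ), by have := i.isLt; omega⟩ - m))
      = ∑ j : Fin n, max 0 (e j.succ - e j.castSucc - m) := rfl
  rw [hR, ← aux13 n m δ e]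
  constructor
  · rintro ⟨f, h1, h2, h3⟩
    refine ⟨f, h1, fun j => ?_, h3⟩
    exact h2 j.castSucc (Nat.succ_lt_succ j.isLt)
  · rintro ⟨f, h1, h2, h3⟩
    refine ⟨f, h1, fun i h => ?_, h3⟩
    have h' : (i : ℕ) < n := by omega
    have := h2 ⟨(i : ℕ), h'⟩
    have hcs : (Fin.castSucc ⟨(i : ℕ), h'⟩ : Fin (n + 1)) = i := by
      apply Fin.ext; simp
    rw [hcs] at this
    convert this using 2
    rfl
end
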